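/- Assume κ = κ^{<κ} is an infinite cardinal and o is an iterand satisfying the combinatorial clauses. Assume additionally that for every condition p = (tr_p, F_p) ∈ Q_o and every cardinal μ < κ there exists x ∈ |TR_o| with tr_p ≤_{TR_o} x, σ_o(x) > μ · |F_p|, and x ∈ A_{o,q} for every q ∈ F_p. Then the forcing notion Q_o satisfies the κ⁺-chain condition: every antichain of (Q_o, ≤_{Q_o}) (a set of pairwise incompatible conditions, where p, q are incompatible when no condition is ≥_{Q_o} both) has cardinality at most κ. -/

import Mathlib

universe u

open Cardinal

/-- The data of a putative `κ`-trunk controller: a carrier with a binary relation and a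
minimum element, a partial "least upper bound" operation `plus` on sequences of elements
indexed by sets of ordinals (with `plusDefined` recording its domain), and a set `S`
together with partial `{0,1}`-valued functions `val x : S → Option Bool`. -/
structure TrunkData (κ : Cardinal.{u}) : Type (u + 1) where
  Carrier : Type u
  le : Carrier → Carrier → Prop
  bot : Carrier
  plusDefined : ∀ s : Set Ordinal.{u}, (s → Carrier) → Prop
  plus : ∀ s : Set Ordinal.{u}, (s → Carrier) → Carrier
  S : Type u
  val : Carrier → S → Option Bool

/-- `T` is a `κ`-trunk controller. -/
structure IsTrunkController (κ : Cardinal.{u}) (T : TrunkData.{u} κ) : Prop where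
  le_refl : ∀ x, T.le x x
  le_trans : ∀ {x y z}, T.le x y → T.le y z → T.le x z
  le_antisymm : ∀ {x y}, T.le x y → T.le y x → x = y
  bot_le : ∀ x, T.le T.bot x
  /-- `plus` is only defined on sequences of length `< κ`. -/
  plusDefined_card_lt : ∀ (s : Set Ordinal.{u}) (f : s → T.Carrier),
    T.plusDefined s f → #s < Cardinal.lift.{u + 1} κ
  /-- whenever defined, the value of `plus` is an upper bound of the terms … -/
  plus_upperBound : ∀ (s : Set Ordinal.{u}) (f : s → T.Carrier),
    T.plusDefined s f → ∀ i, T.le (f i) (T.plus s f)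
  /-- … and is a least upper bound. -/
  plus_least : ∀ (s : Set Ordinal.{u}) (f : s → T.Carrier),
    T.plusDefined s f → ∀ x, (∀ i, T.le (f i) x) → T.le (T.plus s f) x
  /-- axiom (i): every increasing sequence of length `< κ` is in the domain of `plus`. -/
  increasing_plusDefined : ∀ (s : Set Ordinal.{u}) (f : s → T.Carrier),
    #s < Cardinal.lift.{u + 1} κ →
    (∀ i j : s, (i : Ordinal.{u}) ≤ (j : Ordinal.{u}) → T.le (f i) (f j)) →
    T.plusDefined s f
  /-- axiom (ii): among `κ⁺` many `ζ`-tuples there are two which are pairwise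
  in the domain of `plus`. -/
  pairing : ∀ ζ : Ordinal.{u}, ζ < κ.ord →
    ∀ x : Ordinal.{u} → Ordinal.{u} → T.Carrier,
      ∃ α β : Ordinal.{u}, α < β ∧ β < (Order.succ κ).ord ∧
        ∀ ε < ζ, T.plusDefined {α, β} fun γ => x (γ : Ordinal.{u}) ε
  val_mono : ∀ {x y}, T.le x y → ∀ s b, T.val x s = some b → T.val y s = some b

section Product

variable {κ : Cardinal.{u}} {I : Type u}

/-- The support of an element of the `<κ`-support product. -/
def prodSupport (T : I → TrunkData.{u} κ) (f : (i : I) → Option ((T i).Carrier)) : Set I :=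
  {i | f i ≠ none}

/-- Elements of the `<κ`-support product: partial choice functions with support of size `< κ`. -/
def ProdCarrier (T : I → TrunkData.{u} κ) : Type u :=
  { f : (i : I) → Option ((T i).Carrier) // #(prodSupport T f) < κ }

/-- The everywhere-undefined function, i.e. the function with empty domain. -/
def prodBot (T : I → TrunkData.{u} κ) (hκ : ℵ₀ ≤ κ) : ProdCarrier T :=
  ⟨fun _ => none, by
    have h : prodSupport T (fun _ => none) = ∅ := by ext i; simp [prodSupport]
    rw [h]
    simpa using lt_of_lt_of_le Cardinal.aleph0_pos hκ⟩

/-- Given a sequence `F` of elements of the product and a coordinate `i`, the set of indices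
`ε ∈ s` at which `F ε` is defined at `i`. -/
def idxSet (T : I → TrunkData.{u} κ) (s : Set Ordinal.{u}) (F : s → ProdCarrier T)
    (i : I) : Set Ordinal.{u} :=
  {ε | ∃ h : ε ∈ s, ((F ⟨ε, h⟩).1 i).isSome = true}

/-- The sequence of `i`-th coordinates of `F`. -/
noncomputable def idxFun (T : I → TrunkData.{u} κ) (s : Set Ordinal.{u})
    (F : s → ProdCarrier T) (i : I) : idxSet T s F i → (T i).Carrier := fun ε => by
  have h : ∃ h : (ε : Ordinal.{u}) ∈ s, ((F ⟨ε, h⟩).1 i).isSome = true := ε.2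
  exact ((F ⟨(ε : Ordinal.{u}), h.choose⟩).1 i).get h.choose_spec

/-- Definedness of `plus` in the product: the sequence has length `< κ` and at each coordinate
in the union of the supports, the coordinatewise `plus` is defined. -/
def prodPlusDefined (T : I → TrunkData.{u} κ) (s : Set Ordinal.{u})
    (F : s → ProdCarrier T) : Prop :=
  #s < Cardinal.lift.{u + 1} κ ∧ ∀ i : I, (idxSet T s F i).Nonempty →
    (T i).plusDefined (idxSet T s F i) (idxFun T s F i)

open Classical in
/-- The value of `plus` in the product: computed coordinatewise on the union of the supports. -/
noncomputable def prodPlus (T : I → TrunkData.{u} κ) (hκ : ℵ₀ ≤ κ) (s : Set Ordinal.{u})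
    (F : s → ProdCarrier T) : ProdCarrier T :=
  if h : #{i : I | (idxSet T s F i).Nonempty} < κ then
    ⟨fun i => if hi : (idxSet T s F i).Nonempty
        then some ((T i).plus (idxSet T s F i) (idxFun T s F i)) else none, by
      refine lt_of_le_of_lt (Cardinal.mk_le_mk_of_subset ?_) h
      intro i hi
      simp only [Set.mem_setOf_eq]
      by_contra hn
      apply hi
      show (if hi : (idxSet T s F i).Nonempty
        then some ((T i).plus (idxSet T s F i) (idxFun T s F i)) else none) = none
      exact dif_neg hn⟩
  else prodBot T hκ

/-- The `<κ`-support product `∏^{<κ}_{i ∈ I} T i` of a family of trunk-controller data. -/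
noncomputable def prodData (T : I → TrunkData.{u} κ) (hκ : ℵ₀ ≤ κ) : TrunkData.{u} κ where
  Carrier := ProdCarrier T
  le f g := ∀ (i : I) (x : (T i).Carrier), f.1 i = some x →
    ∃ y : (T i).Carrier, g.1 i = some y ∧ (T i).le x y
  bot := prodBot T hκ
  plusDefined := prodPlusDefined T
  plus := prodPlus T hκ
  S := Σ i : I, (T i).S
  val f p :=
    match f.1 p.1 with
    | none => none
    | some x => (T p.1).val x p.2

end Product

/-- An iterand `o` satisfying the combinatorial clauses: a `κ`-trunk controller `TR`,
an atomic forcing (a quasi-order) `At` with trunk function `tr`, a nondecreasing cardinal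
function `σ` with values in `[2, κ]`, sets `A p` of possible trunks of extensions,
and the two demands (F) and (G). -/
structure Iterand (κ : Cardinal.{u}) : Type (u + 1) where
  TR : TrunkData.{u} κ
  isTC : IsTrunkController κ TR
  /-- the atomic forcing `Q_o^at` … -/
  At : Type u
  /-- … with its quasi-order. -/
  atLE : At → At → Prop
  atLE_refl : ∀ p, atLE p p
  atLE_trans : ∀ {p q r}, atLE p q → atLE q r → atLE p r
  /-- the trunk of an atomic condition. -/
  tr : At → TR.Carrier
  tr_mono : ∀ {p q}, atLE p q → TR.le (tr p) (tr q)
  /-- the function `σ_o : |TR_o| → [2, κ]`. -/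
  σ : TR.Carrier → Cardinal.{u}
  two_le_σ : ∀ x, 2 ≤ σ x
  σ_le_kappa : ∀ x, σ x ≤ κ
  σ_mono : ∀ {x y}, TR.le x y → σ x ≤ σ y
  /-- `A p ⊆ {tr q : q ≥ p}` … -/
  A : At → Set TR.Carrier
  A_sub : ∀ p, ∀ x ∈ A p, ∃ q, atLE p q ∧ tr q = x
  /-- … is upward closed. -/
  A_upward : ∀ p, ∀ x ∈ A p, ∀ y, TR.le x y → y ∈ A p
  /-- clause (F): every `≤`-increasing, `σ`-truly increasing sequence of limit length `< κ`
  has a least upper bound whose trunk is the `plus` of the trunks. -/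
  clauseF : ∀ δ : Ordinal.{u}, Order.IsSuccLimit δ → δ < κ.ord →
    ∀ p : Set.Iio δ → At,
      (∀ i j : Set.Iio δ, (i : Ordinal.{u}) ≤ (j : Ordinal.{u}) → atLE (p i) (p j)) →
      (∀ i j : Set.Iio δ, (i : Ordinal.{u}) < (j : Ordinal.{u}) →
        σ (tr (p i)) < σ (tr (p j)) ∨ (σ (tr (p i)) = κ ∧ σ (tr (p j)) = κ)) →
      ∃ q, (∀ i, atLE (p i) q) ∧ (∀ r, (∀ i, atLE (p i) r) → atLE q r) ∧
        tr q = TR.plus (Set.Iio δ) fun i => tr (p i)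
  /-- clause (G): conditions with σ-constant trunks, fewer than `σ` of them, whose trunks
  lie in the domain of `plus`, have a common upper bound whose trunk lies in all the `A`s. -/
  clauseG : ∀ i_star : Ordinal.{u}, 0 < i_star →
    ∀ p : Set.Iio i_star → At, ∀ c : Cardinal.{u},
      (∀ i, σ (tr (p i)) = c) → i_star < c.ord →
      TR.plusDefined (Set.Iio i_star) (fun i => tr (p i)) →
      ∃ q, (∀ i, atLE (p i) q) ∧ ∀ i, tr q ∈ A (p i)

variable {κ : Cardinal.{u}}

/-- A condition of the derived forcing `Q_o`: a pair `(tr_p, F_p)` with `F_p` a set of atomic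
conditions of size `< σ(tr_p)`, all of whose trunks are `≤ tr_p`, with `tr_p ∈ A q` for
`q ∈ F_p`. -/
def IsCond (o : Iterand.{u} κ) (p : o.TR.Carrier × Set o.At) : Prop :=
  #p.2 < o.σ p.1 ∧ ∀ q ∈ p.2, o.TR.le (o.tr q) p.1 ∧ p.1 ∈ o.A q

/-- The order of the derived forcing `Q_o`. -/
def condLE (o : Iterand.{u} κ) (p q : o.TR.Carrier × Set o.At) : Prop :=
  o.TR.le p.1 q.1 ∧ p.2 ⊆ q.2

/-- Assume `κ = κ^{<κ}` is an infinite cardinal and `o` is an iterand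
satisfying the combinatorial clauses.  Assume additionally that every condition
`p = (tr_p, F_p) ∈ Q_o` and every cardinal `μ < κ` admit an `x ∈ |TR_o|` with
`tr_p ≤ x`, `σ(x) > μ · |F_p|` and `x ∈ A q` for every `q ∈ F_p`.  Then `Q_o` satisfies the
`κ⁺`-chain condition: every antichain has cardinality at most `κ`. -/
theorem cond_antichain_card_le {κ : Cardinal.{u}} (hκinf : ℵ₀ ≤ κ) (hκ : κ ^< κ = κ)
    (o : Iterand.{u} κ)
    (hext : ∀ p : o.TR.Carrier × Set o.At, IsCond o p → ∀ μ : Cardinal.{u}, μ < κ →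
      ∃ x : o.TR.Carrier, o.TR.le p.1 x ∧ μ * #p.2 < o.σ x ∧ ∀ q ∈ p.2, x ∈ o.A q)
    (S : Set (o.TR.Carrier × Set o.At)) (hS : ∀ p ∈ S, IsCond o p)
    (hanti : ∀ p ∈ S, ∀ q ∈ S, p ≠ q →
      ¬∃ r : o.TR.Carrier × Set o.At, IsCond o r ∧ condLE o p r ∧ condLE o q r) :
    #S ≤ κ := by
  classical
  by_contra hcon
  have hS' : Order.succ κ ≤ #S := Order.succ_le_of_lt (lt_of_not_ge hcon)
  have h1 : #(Set.Iio (Order.succ κ).ord) ≤ #(ULift.{u+1} S) := by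
    rw [Cardinal.mk_uLift, Ordinal.mk_Iio_ordinal, Cardinal.card_ord]
    exact Cardinal.lift_le.2 hS'
  obtain ⟨g0⟩ := ((Cardinal.le_def _ _).1 h1)
  set x : Ordinal.{u} → Ordinal.{u} → o.TR.Carrier :=
    fun γ _ => if h : γ < (Order.succ κ).ord
      then ((g0 ⟨γ, h⟩).down : o.TR.Carrier × Set o.At).1 else o.TR.bot with hxdef
  have hone : (1 : Ordinal.{u}) < κ.ord := by
    calc (1 : Ordinal.{u}) < Ordinal.omega0 := Ordinal.one_lt_omega0
    _ ≤ κ.ord := Cardinal.omega0_le_ord.2 hκinf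
  obtain ⟨α, β, hαβ, hβ, hpd⟩ := o.isTC.pairing 1 hone x
  have hα : α < (Order.succ κ).ord := hαβ.trans hβ
  have hpd0 := hpd 0 zero_lt_one
  set p : ↥S := (g0 ⟨α, hα⟩).down with hp
  set q : ↥S := (g0 ⟨β, hβ⟩).down with hq
  set z := o.TR.plus {α, β} (fun γ => x γ 0) with hz
  have hub := o.isTC.plus_upperBound {α, β} (fun γ => x γ 0) hpd0
  have hxα : x α 0 = (p : o.TR.Carrier × Set o.At).1 := by
    rw [hxdef]; exact dif_pos hα
  have hxβ : x β 0 = (q : o.TR.Carrier × Set o.At).1 := by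
    rw [hxdef]; exact dif_pos hβ
  have hpz : o.TR.le (p : o.TR.Carrier × Set o.At).1 z := by
    have := hub ⟨α, Set.mem_insert _ _⟩
    rw [← hxα]; exact this
  have hqz : o.TR.le (q : o.TR.Carrier × Set o.At).1 z := by
    have := hub ⟨β, Set.mem_insert_of_mem _ rfl⟩
    rw [← hxβ]; exact this
  have hpq : (p : o.TR.Carrier × Set o.At) ≠ (q : o.TR.Carrier × Set o.At) := by
    intro h
    have h2 : g0 ⟨α, hα⟩ = g0 ⟨β, hβ⟩ := ULift.down_injective (Subtype.coe_injective h)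
    have h3 := g0.injective h2
    exact hαβ.ne (congrArg Subtype.val h3)
  have hpS : (p : o.TR.Carrier × Set o.At) ∈ S := p.2
  have hqS : (q : o.TR.Carrier × Set o.At) ∈ S := q.2
  have hpC := hS _ hpS
  have hqC := hS _ hqS
  have hFp : #(p : o.TR.Carrier × Set o.At).2 < κ := hpC.1.trans_le (o.σ_le_kappa _)
  have hFq : #(q : o.TR.Carrier × Set o.At).2 < κ := hqC.1.trans_le (o.σ_le_kappa _)
  have hμ : #(p : o.TR.Carrier × Set o.At).2 + #(q : o.TR.Carrier × Set o.At).2 + 1 < κ :=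
    Cardinal.add_lt_of_lt hκinf (Cardinal.add_lt_of_lt hκinf hFp hFq)
      (lt_of_lt_of_le Cardinal.one_lt_aleph0 hκinf)
  -- obtain a trunk `y ≥ z` with `σ y` large enough
  have key : ∃ y, o.TR.le z y ∧
      #((p : o.TR.Carrier × Set o.At).2 ∪ (q : o.TR.Carrier × Set o.At).2 : Set o.At)
        < o.σ y := by
    by_cases hun : ((p : o.TR.Carrier × Set o.At).2 ∪
        (q : o.TR.Carrier × Set o.At).2 : Set o.At).Nonempty
    · have main : ∀ r : ↥S, o.TR.le (r : o.TR.Carrier × Set o.At).1 z →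
          (r : o.TR.Carrier × Set o.At).2.Nonempty → ∃ y, o.TR.le z y ∧
          #((p : o.TR.Carrier × Set o.At).2 ∪ (q : o.TR.Carrier × Set o.At).2 : Set o.At)
            < o.σ y := by
        intro r hrz hrne
        have hcond : IsCond o (z, (r : o.TR.Carrier × Set o.At).2) := by
          constructor
          · exact (hS _ r.2).1.trans_le (o.σ_mono hrz)
          · intro qa hqa
            obtain ⟨h1', h2'⟩ := (hS _ r.2).2 qa hqa
            exact ⟨o.isTC.le_trans h1' hrz, o.A_upward qa _ h2' _ hrz⟩
        obtain ⟨y, hzy, hσy, _⟩ := hext (z, (r : o.TR.Carrier × Set o.At).2) hcond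
          (#(p : o.TR.Carrier × Set o.At).2 + #(q : o.TR.Carrier × Set o.At).2 + 1) hμ
        refine ⟨y, hzy, lt_of_le_of_lt ?_ hσy⟩
        have h1' : (1 : Cardinal.{u}) ≤ #(r : o.TR.Carrier × Set o.At).2 :=
          Cardinal.one_le_iff_ne_zero.2 (Cardinal.mk_ne_zero_iff.2 hrne.to_subtype)
        calc #((p : o.TR.Carrier × Set o.At).2 ∪
              (q : o.TR.Carrier × Set o.At).2 : Set o.At)
            ≤ #(p : o.TR.Carrier × Set o.At).2 + #(q : o.TR.Carrier × Set o.At).2 :=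
              Cardinal.mk_union_le _ _
          _ ≤ #(p : o.TR.Carrier × Set o.At).2 + #(q : o.TR.Carrier × Set o.At).2 + 1 :=
              self_le_add_right _ _
          _ = (#(p : o.TR.Carrier × Set o.At).2 + #(q : o.TR.Carrier × Set o.At).2 + 1)
              * 1 := (mul_one _).symm
          _ ≤ _ := mul_le_mul_right h1' _
      obtain ⟨a, ha⟩ := hun
      rcases ha with ha | ha
      · exact main p hpz ⟨a, ha⟩
      · exact main q hqz ⟨a, ha⟩
    · refine ⟨z, o.isTC.le_refl z, ?_⟩
      rw [Set.not_nonempty_iff_eq_empty.1 hun]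
      have h0 : (0 : Cardinal.{u}) < 2 := by norm_num
      simpa using lt_of_lt_of_le h0 (o.two_le_σ z)
  obtain ⟨y, hzy, hy⟩ := key
  refine hanti _ hpS _ hqS hpq
    ⟨(y, (p : o.TR.Carrier × Set o.At).2 ∪ (q : o.TR.Carrier × Set o.At).2), ?_, ?_, ?_⟩
  · constructor
    · exact hy
    · intro qa hqa
      rcases hqa with hqa | hqa
      · obtain ⟨h1', h2'⟩ := hpC.2 qa hqa
        exact ⟨o.isTC.le_trans h1' (o.isTC.le_trans hpz hzy),
          o.A_upward qa _ h2' _ (o.isTC.le_trans hpz hzy)⟩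
      · obtain ⟨h1', h2'⟩ := hqC.2 qa hqa
        exact ⟨o.isTC.le_trans h1' (o.isTC.le_trans hqz hzy),
          o.A_upward qa _ h2' _ (o.isTC.le_trans hqz hzy)⟩
  · exact ⟨o.isTC.le_trans hpz hzy, Set.subset_union_left⟩
  · exact ⟨o.isTC.le_trans hqz hzy, Set.subset_union_right⟩
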